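/- Let (ε_t)_{t∈ℤ} be i.i.d. with mean zero, finite variance, and finite fourth moment, and let Y_t = Σ_{s=0}^∞ ψ_s ε_{t−s} with ψ_s ≥ 0 and Σ_{s=0}^∞ ψ_s < ∞. Then the covariances of lagged products are summable in the time shift, uniformly over the lags: sup_{m∈ℤ} Σ_{s=0}^∞ | Cov( Y_0 Y_m , Y_s Y_{s+m} ) | < ∞; equivalently, for every t and all k, l ≥ 1, Σ_{s=0}^∞ sup_{k,l} |Cov( Y_{t−k} Y_{t−l} , Y_{t−s−k} Y_{t−s−l} )| < ∞. -/

import Mathlib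

open MeasureTheory Filter ProbabilityTheory

noncomputable section

variable {Ω : Type*} [MeasurableSpace Ω]

/-- `arX Y t a ω = Σ_{k=1}^∞ a_k Y_{t-k}(ω)`; the index `k : ℕ` represents lag `k+1`. -/
def arX (Y : ℤ → Ω → ℝ) (t : ℤ) (a : ℕ → ℝ) (ω : Ω) : ℝ :=
  ∑' k : ℕ, a k * Y (t - 1 - (k : ℤ)) ω

/-- squared RKHS norm `Σ_k λ_k² b_k²`. -/
def eNormSq (L : ℕ → ℝ) (b : ℕ → ℝ) : ℝ := ∑' k : ℕ, (L k * b k) ^ 2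

/-- RKHS norm `|b|_E`. -/
def eNorm (L : ℕ → ℝ) (b : ℕ → ℝ) : ℝ := Real.sqrt (eNormSq L b)

/-- ℓ² norm `|b|₂`. -/
def l2Norm (b : ℕ → ℝ) : ℝ := Real.sqrt (∑' k : ℕ, (b k) ^ 2)

/-- membership in the ellipsoid `E_K(B)` (index `k : ℕ` is lag `k+1`, so `b_j = 0` for
`j > K` reads `b k = 0` for `k ≥ K`). -/
def memEKB (L : ℕ → ℝ) (K : ℕ) (B : ℝ) (b : ℕ → ℝ) : Prop :=
  Summable (fun k => (L k * b k) ^ 2) ∧ eNormSq L b ≤ B ^ 2 ∧ ∀ k, K ≤ k → b k = 0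

/-- membership in `E_K = ∪_B E_K(B)`. -/
def memEK (L : ℕ → ℝ) (K : ℕ) (b : ℕ → ℝ) : Prop :=
  Summable (fun k => (L k * b k) ^ 2) ∧ ∀ k, K ≤ k → b k = 0

/-- membership in `E(B)`. -/
def memEB (L : ℕ → ℝ) (B : ℝ) (b : ℕ → ℝ) : Prop :=
  Summable (fun k => (L k * b k) ^ 2) ∧ eNormSq L b ≤ B ^ 2

/-- membership in `E`. -/
def memE (L : ℕ → ℝ) (b : ℕ → ℝ) : Prop := Summable fun k => (L k * b k) ^ 2

/-- empirical least-squares loss `(1/n) Σ_{t=1}^n (Y_t − X_t(b))²`. -/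
def empLoss (Y : ℤ → Ω → ℝ) (n : ℕ) (b : ℕ → ℝ) (ω : Ω) : ℝ :=
  (1 / (n : ℝ)) * ∑ t ∈ Finset.range n, (Y (t + 1) ω - arX Y (t + 1) b ω) ^ 2

/-- penalized empirical loss. -/
def penLoss (Y : ℤ → Ω → ℝ) (L : ℕ → ℝ) (n : ℕ) (τ : ℝ) (b : ℕ → ℝ) (ω : Ω) : ℝ :=
  empLoss Y n b ω + τ * eNormSq L b

/-- population loss `E (Y₁ − X₁(b))²`. -/
def popLoss (μ : Measure Ω) (Y : ℤ → Ω → ℝ) (b : ℕ → ℝ) : ℝ :=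
  ∫ ω, (Y 1 ω - arX Y 1 b ω) ^ 2 ∂μ

/-- population penalized loss `E X₁(b−φ)² + τ |b|_E²`. -/
def popPenLoss (μ : Measure Ω) (Y : ℤ → Ω → ℝ) (L : ℕ → ℝ) (φ : ℕ → ℝ) (τ : ℝ)
    (b : ℕ → ℝ) : ℝ :=
  (∫ ω, (arX Y 1 (fun k => b k - φ k) ω) ^ 2 ∂μ) + τ * eNormSq L b

/-- `Z_n = O_p(a_n)`. -/
def IsBigOp (μ : Measure Ω) (Z : ℕ → Ω → ℝ) (a : ℕ → ℝ) : Prop :=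
  ∀ η : ℝ, 0 < η → ∃ M : ℝ, 0 < M ∧
    ∀ᶠ n in atTop, μ {ω | M * |a n| < |Z n ω|} ≤ ENNReal.ofReal η

/-- convergence to `0` in probability. -/
def TendstoInProb (μ : Measure Ω) (Z : ℕ → Ω → ℝ) : Prop :=
  ∀ η : ℝ, 0 < η → Tendsto (fun n => μ {ω | η < |Z n ω|}) atTop (nhds 0)

/-- Condition 1 of the paper. `φ k`, `L k` denote `φ_{k+1}`, `λ_{k+1}` (1-indexed). -/
structure Condition1 (μ : Measure Ω) (Y : ℤ → Ω → ℝ) (φ : ℕ → ℝ) (ε : ℤ → Ω → ℝ)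
    (L : ℕ → ℝ) (lam : ℝ) : Prop where
  lam_gt : 1 / 2 < lam
  L_pos : ∀ k, 0 < L k
  L_asymp : ∃ c₁ c₂ : ℝ, 0 < c₁ ∧ c₁ ≤ c₂ ∧ ∀ k : ℕ,
      c₁ * ((k : ℝ) + 1) ^ lam ≤ L k ∧ L k ≤ c₂ * ((k : ℝ) + 1) ^ lam
  meas_Y : ∀ t, Measurable (Y t)
  meas_eps : ∀ t, Measurable (ε t)
  phi_mem : memE L φ
  ar_eq : ∀ t : ℤ, ∀ᵐ ω ∂μ, Y t ω = arX Y t φ ω + ε t ω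
  no_roots : ∀ z : ℂ, ‖z‖ ≤ 1 → (1 : ℂ) - ∑' k : ℕ, (φ k : ℂ) * z ^ (k + 1) ≠ 0
  indep : iIndepFun ε μ
  ident : ∀ s t : ℤ, IdentDistrib (ε s) (ε t) μ μ
  mean_zero : ∀ t, ∫ ω, ε t ω ∂μ = 0
  fourth_moment : ∀ t, Integrable (fun ω => (ε t ω) ^ 4) μ
  sq_integrable : ∀ t, Integrable (fun ω => (Y t ω) ^ 2) μ
  stationary : ∀ (s : ℤ) (m : ℕ) (t : Fin m → ℤ),
      Measure.map (fun ω i => Y (t i + s) ω) μ = Measure.map (fun ω i => Y (t i) ω) μ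




open scoped ENNReal NNReal
set_option linter.unusedSectionVars false
set_option linter.unusedVariables false
set_option maxHeartbeats 4000000

private lemma abs_mul4 (a b c d : ℝ) : |a * b * (c * d)| ≤ (a^4 + b^4 + (c^4 + d^4))/4 := by
  rw [abs_le]
  constructor <;>
  nlinarith [sq_nonneg (a*b - c*d), sq_nonneg (a*b + c*d), sq_nonneg (a^2 - b^2),
    sq_nonneg (c^2 - d^2), sq_nonneg (a^2 + b^2), sq_nonneg (c^2 + d^2)]

private lemma abs_mul2 (a b : ℝ) : |a * b| ≤ (a^2 + b^2)/2 := by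
  rw [abs_le]; constructor <;> nlinarith [sq_nonneg (a-b), sq_nonneg (a+b)]

private lemma ind_le_ind {P Q : Prop} [Decidable P] [Decidable Q] (h : P → Q) :
    (if P then (1:ℝ) else 0) ≤ (if Q then (1:ℝ) else 0) := by
  by_cases hP : P
  · simp [hP, h hP]
  · simp [hP]; positivity

private lemma sum_ind_le_one (z : ℤ) (N : ℕ) :
    ∑ s ∈ Finset.range N, (if ((s:ℤ) = z) then (1:ℝ) else 0) ≤ 1 := by
  rcases le_or_gt 0 z with hz | hz
  · have h : ∀ s : ℕ, ((s:ℤ) = z) ↔ s = z.toNat := by intro s; omega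
    calc ∑ s ∈ Finset.range N, (if ((s:ℤ) = z) then (1:ℝ) else 0)
        = ∑ s ∈ Finset.range N, (if s = z.toNat then (1:ℝ) else 0) := by
          exact Finset.sum_congr rfl fun s _ => if_congr (h s) rfl rfl
      _ ≤ 1 := by rw [Finset.sum_ite_eq']; split <;> norm_num
  · have h : ∀ s : ℕ, ¬ ((s:ℤ) = z) := by intro s; omega
    simp [h]

set_option linter.unusedSectionVars false
section Aux
variable {μ : Measure Ω} [IsProbabilityMeasure μ] {ε : ℤ → Ω → ℝ}

private lemma ident_sq (hident : ∀ s t : ℤ, IdentDistrib (ε s) (ε t) μ μ) (t : ℤ) :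
    ∫ ω, (ε t ω)^2 ∂μ = ∫ ω, (ε 0 ω)^2 ∂μ :=
  ((hident t 0).comp (measurable_id.pow_const 2)).integral_eq

private lemma ident_p4 (hident : ∀ s t : ℤ, IdentDistrib (ε s) (ε t) μ μ) (t : ℤ) :
    ∫ ω, (ε t ω)^4 ∂μ = ∫ ω, (ε 0 ω)^4 ∂μ :=
  ((hident t 0).comp (measurable_id.pow_const 4)).integral_eq

private lemma int_sq (hmeas : ∀ t, Measurable (ε t))
    (h4 : ∀ t, Integrable (fun ω => (ε t ω)^4) μ) (t : ℤ) :
    Integrable (fun ω => (ε t ω)^2) μ := by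
  refine ((integrable_const (1:ℝ)).add (h4 t)).mono'
    ((hmeas t).pow_const 2).aestronglyMeasurable (Eventually.of_forall fun ω => ?_)
  have h := sq_nonneg ((ε t ω)^2 - 1)
  have h2 := sq_nonneg (ε t ω)
  simp only [Real.norm_eq_abs, Pi.add_apply, Pi.one_apply]
  rw [abs_of_nonneg (by positivity)]
  nlinarith

private lemma int_mul2 (hmeas : ∀ t, Measurable (ε t))
    (h4 : ∀ t, Integrable (fun ω => (ε t ω)^4) μ) (t1 t2 : ℤ) :
    Integrable (fun ω => ε t1 ω * ε t2 ω) μ := by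
  have hg : Integrable (fun ω => ((ε t1 ω)^2 + (ε t2 ω)^2)/2) μ :=
    ((int_sq hmeas h4 t1).add (int_sq hmeas h4 t2)).div_const 2
  refine hg.mono'
    ((hmeas t1).mul (hmeas t2)).aestronglyMeasurable (Eventually.of_forall fun ω => ?_)
  rw [Real.norm_eq_abs]; exact abs_mul2 _ _

private lemma int_mul4 (hmeas : ∀ t, Measurable (ε t))
    (h4 : ∀ t, Integrable (fun ω => (ε t ω)^4) μ) (t1 t2 t3 t4 : ℤ) :
    Integrable (fun ω => ε t1 ω * ε t2 ω * (ε t3 ω * ε t4 ω)) μ := by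
  have hg : Integrable (fun ω => ((ε t1 ω)^4 + (ε t2 ω)^4 + ((ε t3 ω)^4 + (ε t4 ω)^4))/4) μ := by
    have h12 : Integrable (fun ω => (ε t1 ω)^4 + (ε t2 ω)^4) μ := (h4 t1).add (h4 t2)
    have h34 : Integrable (fun ω => (ε t3 ω)^4 + (ε t4 ω)^4) μ := (h4 t3).add (h4 t4)
    exact (h12.add h34).div_const 4
  refine hg.mono'
    (((hmeas t1).mul (hmeas t2)).mul ((hmeas t3).mul (hmeas t4))).aestronglyMeasurable
    (Eventually.of_forall fun ω => ?_)
  rw [Real.norm_eq_abs]; exact abs_mul4 _ _ _ _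

private lemma abs_int_quad (hmeas : ∀ t, Measurable (ε t))
    (hident : ∀ s t : ℤ, IdentDistrib (ε s) (ε t) μ μ)
    (h4 : ∀ t, Integrable (fun ω => (ε t ω)^4) μ) (t1 t2 t3 t4 : ℤ) :
    ∫ ω, |ε t1 ω * ε t2 ω * (ε t3 ω * ε t4 ω)| ∂μ ≤ ∫ ω, (ε 0 ω)^4 ∂μ := by
  have hg : Integrable (fun ω => ((ε t1 ω)^4 + (ε t2 ω)^4 + ((ε t3 ω)^4 + (ε t4 ω)^4))/4) μ :=
    (((h4 t1).add (h4 t2)).add ((h4 t3).add (h4 t4))).div_const 4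
  calc ∫ ω, |ε t1 ω * ε t2 ω * (ε t3 ω * ε t4 ω)| ∂μ
      ≤ ∫ ω, ((ε t1 ω)^4 + (ε t2 ω)^4 + ((ε t3 ω)^4 + (ε t4 ω)^4))/4 ∂μ := by
        refine integral_mono_of_nonneg (Eventually.of_forall fun ω => abs_nonneg _) hg
          (Eventually.of_forall fun ω => ?_)
        have := abs_mul4 (ε t1 ω) (ε t2 ω) (ε t3 ω) (ε t4 ω)
        linarith
    _ = ∫ ω, (ε 0 ω)^4 ∂μ := by
        have h12 : Integrable (fun ω => (ε t1 ω)^4 + (ε t2 ω)^4) μ := (h4 t1).add (h4 t2)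
        have h34 : Integrable (fun ω => (ε t3 ω)^4 + (ε t4 ω)^4) μ := (h4 t3).add (h4 t4)
        rw [integral_div, integral_add h12 h34,
          integral_add (h4 t1) (h4 t2), integral_add (h4 t3) (h4 t4),
          ident_p4 hident t1, ident_p4 hident t2, ident_p4 hident t3, ident_p4 hident t4]
        ring

private lemma abs_int_pair (hmeas : ∀ t, Measurable (ε t))
    (hident : ∀ s t : ℤ, IdentDistrib (ε s) (ε t) μ μ)
    (h4 : ∀ t, Integrable (fun ω => (ε t ω)^4) μ) (t1 t2 : ℤ) :
    ∫ ω, |ε t1 ω * ε t2 ω| ∂μ ≤ ∫ ω, (ε 0 ω)^2 ∂μ := by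
  have hg : Integrable (fun ω => ((ε t1 ω)^2 + (ε t2 ω)^2)/2) μ :=
    ((int_sq hmeas h4 t1).add (int_sq hmeas h4 t2)).div_const 2
  calc ∫ ω, |ε t1 ω * ε t2 ω| ∂μ
      ≤ ∫ ω, ((ε t1 ω)^2 + (ε t2 ω)^2)/2 ∂μ := by
        refine integral_mono_of_nonneg (Eventually.of_forall fun ω => abs_nonneg _) hg
          (Eventually.of_forall fun ω => abs_mul2 _ _)
    _ = ∫ ω, (ε 0 ω)^2 ∂μ := by
        rw [integral_div, integral_add (int_sq hmeas h4 t1) (int_sq hmeas h4 t2),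
          ident_sq hident t1, ident_sq hident t2]
        ring

private lemma E4abs (hmeas : ∀ t, Measurable (ε t))
    (hident : ∀ s t : ℤ, IdentDistrib (ε s) (ε t) μ μ)
    (h4 : ∀ t, Integrable (fun ω => (ε t ω)^4) μ) (t1 t2 t3 t4 : ℤ) :
    |∫ ω, ε t1 ω * ε t2 ω * (ε t3 ω * ε t4 ω) ∂μ| ≤ ∫ ω, (ε 0 ω)^4 ∂μ := by
  have h1 : |∫ ω, ε t1 ω * ε t2 ω * (ε t3 ω * ε t4 ω) ∂μ|
      ≤ ∫ ω, |ε t1 ω * ε t2 ω * (ε t3 ω * ε t4 ω)| ∂μ := by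
    have h := norm_integral_le_integral_norm (μ := μ)
      (fun ω => ε t1 ω * ε t2 ω * (ε t3 ω * ε t4 ω))
    simp only [Real.norm_eq_abs] at h
    exact h
  exact h1.trans (abs_int_quad hmeas hident h4 t1 t2 t3 t4)

private lemma E2abs (hmeas : ∀ t, Measurable (ε t))
    (hident : ∀ s t : ℤ, IdentDistrib (ε s) (ε t) μ μ)
    (h4 : ∀ t, Integrable (fun ω => (ε t ω)^4) μ) (t1 t2 : ℤ) :
    |∫ ω, ε t1 ω * ε t2 ω ∂μ| ≤ ∫ ω, (ε 0 ω)^2 ∂μ := by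
  have h1 : |∫ ω, ε t1 ω * ε t2 ω ∂μ| ≤ ∫ ω, |ε t1 ω * ε t2 ω| ∂μ := by
    have h := norm_integral_le_integral_norm (μ := μ) (fun ω => ε t1 ω * ε t2 ω)
    simp only [Real.norm_eq_abs] at h
    exact h
  exact h1.trans (abs_int_pair hmeas hident h4 t1 t2)

end Aux

set_option linter.unusedSectionVars false

section Aux3
variable {μ : Measure Ω} [IsProbabilityMeasure μ] {ε : ℤ → Ω → ℝ}

private lemma e2_zero (hmeas : ∀ t, Measurable (ε t))
    (hindep : iIndepFun ε μ)
    (hmean : ∀ t, ∫ ω, ε t ω ∂μ = 0) {t1 t2 : ℤ} (h : t1 ≠ t2) :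
    ∫ ω, ε t1 ω * ε t2 ω ∂μ = 0 := by
  rw [(hindep.indepFun h).integral_fun_mul_eq_mul_integral (hmeas t1).aestronglyMeasurable
    (hmeas t2).aestronglyMeasurable, hmean t1, zero_mul]

private lemma zero4 (hmeas : ∀ t, Measurable (ε t))
    (hindep : iIndepFun ε μ)
    (hmean : ∀ t, ∫ ω, ε t ω ∂μ = 0) {u a b c : ℤ}
    (ha : u ≠ a) (hb : u ≠ b) (hc : u ≠ c) :
    ∫ ω, ε u ω * (ε a ω * (ε b ω * ε c ω)) ∂μ = 0 := by
  classical
  set S : Multiset ℤ := {a, b, c} with hS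
  set g : ℤ → Ω → ℝ := fun j ω => ε j ω ^ (if j = u then 1 else S.count j) with hg
  have hgmeas : ∀ j, Measurable (g j) := fun j => (hmeas j).pow_const _
  have hgind : iIndepFun g μ :=
    hindep.comp (fun j x => x ^ (if j = u then 1 else S.count j))
      (fun j => measurable_id.pow_const _)
  have hu : u ∉ S.toFinset := by
    rw [Multiset.mem_toFinset]
    simp only [hS, Multiset.insert_eq_cons, Multiset.mem_cons, Multiset.mem_singleton]
    rintro (h | h | h) <;> [exact ha h; exact hb h; exact hc h]
  have hprod : ∀ ω, ε a ω * (ε b ω * ε c ω) = ∏ j ∈ S.toFinset, g j ω := by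
    intro ω
    have h1 : (S.map (fun j => ε j ω)).prod = ∏ j ∈ S.toFinset, ε j ω ^ S.count j :=
      Finset.prod_multiset_map_count S _
    have h2 : (S.map (fun j => ε j ω)).prod = ε a ω * (ε b ω * ε c ω) := by
      simp [hS]
    rw [← h2, h1]
    refine Finset.prod_congr rfl fun j hj => ?_
    have hju : ¬ (j = u) := fun h => hu (h ▸ hj)
    simp [hg, hju]
  have hgu : ∀ ω, g u ω = ε u ω := by intro ω; simp [hg]
  have hIF : IndepFun (g u) (∏ j ∈ S.toFinset, g j) μ :=
    (hgind.indepFun_finsetProd_of_notMem hgmeas hu).symm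
  calc ∫ ω, ε u ω * (ε a ω * (ε b ω * ε c ω)) ∂μ
      = ∫ ω, g u ω * (∏ j ∈ S.toFinset, g j) ω ∂μ := by
        refine integral_congr_ae (Eventually.of_forall fun ω => ?_)
        dsimp only
        rw [hgu ω, Finset.prod_apply, ← hprod ω]
    _ = (∫ ω, g u ω ∂μ) * ∫ ω, (∏ j ∈ S.toFinset, g j) ω ∂μ := by
        have hPm : Measurable (∏ j ∈ S.toFinset, g j) := by
          rw [Finset.prod_fn]
          exact Finset.measurable_prod _ (fun j _ => hgmeas j)
        exact hIF.integral_fun_mul_eq_mul_integral (hgmeas u).aestronglyMeasurable hPm.aestronglyMeasurable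
    _ = 0 := by
        have : ∫ ω, g u ω ∂μ = 0 := by
          rw [show (fun ω => g u ω) = ε u from funext hgu]; exact hmean u
        rw [this, zero_mul]

private lemma D_zero (hmeas : ∀ t, Measurable (ε t))
    (hindep : iIndepFun ε μ)
    (hident : ∀ s t : ℤ, IdentDistrib (ε s) (ε t) μ μ)
    (hmean : ∀ t, ∫ ω, ε t ω ∂μ = 0)
    (h4 : ∀ t, Integrable (fun ω => (ε t ω)^4) μ)
    {t1 t2 t3 t4 : ℤ} (hm1 : ¬(t1 = t3 ∧ t2 = t4)) (hm2 : ¬(t1 = t4 ∧ t2 = t3)) :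
    ∫ ω, ε t1 ω * ε t2 ω * (ε t3 ω * ε t4 ω) ∂μ
      = (∫ ω, ε t1 ω * ε t2 ω ∂μ) * ∫ ω, ε t3 ω * ε t4 ω ∂μ := by
  by_cases h12 : t1 = t2
  · subst h12
    by_cases h34 : t3 = t4
    · subst h34
      have h13 : t1 ≠ t3 := fun h => hm1 ⟨h, h⟩
      have hind : IndepFun (fun ω => (ε t1 ω)^2) (fun ω => (ε t3 ω)^2) μ :=
        (hindep.indepFun h13).comp (measurable_id.pow_const 2) (measurable_id.pow_const 2)
      have e1 : ∫ ω, ε t1 ω * ε t1 ω * (ε t3 ω * ε t3 ω) ∂μ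
          = ∫ ω, (ε t1 ω)^2 * (ε t3 ω)^2 ∂μ :=
        integral_congr_ae (Eventually.of_forall fun ω => by ring)
      have e2 : ∫ ω, ε t1 ω * ε t1 ω ∂μ = ∫ ω, (ε t1 ω)^2 ∂μ :=
        integral_congr_ae (Eventually.of_forall fun ω => by ring)
      have e3 : ∫ ω, ε t3 ω * ε t3 ω ∂μ = ∫ ω, (ε t3 ω)^2 ∂μ :=
        integral_congr_ae (Eventually.of_forall fun ω => by ring)
      rw [e1, e2, e3]
      exact hind.integral_fun_mul_eq_mul_integral ((hmeas t1).pow_const 2).aestronglyMeasurable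
        ((hmeas t3).pow_const 2).aestronglyMeasurable
    · rw [e2_zero hmeas hindep hmean h34, mul_zero]
      by_cases h31 : t3 = t1
      · -- singleton is t4
        have k1 : t4 ≠ t1 := fun h => h34 (h31.trans h.symm)
        have k3 : t4 ≠ t3 := Ne.symm h34
        calc ∫ ω, ε t1 ω * ε t1 ω * (ε t3 ω * ε t4 ω) ∂μ
            = ∫ ω, ε t4 ω * (ε t1 ω * (ε t1 ω * ε t3 ω)) ∂μ :=
              integral_congr_ae (Eventually.of_forall fun ω => by ring)
          _ = 0 := zero4 hmeas hindep hmean k1 k1 k3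
      · -- singleton is t3
        calc ∫ ω, ε t1 ω * ε t1 ω * (ε t3 ω * ε t4 ω) ∂μ
            = ∫ ω, ε t3 ω * (ε t1 ω * (ε t1 ω * ε t4 ω)) ∂μ :=
              integral_congr_ae (Eventually.of_forall fun ω => by ring)
          _ = 0 := zero4 hmeas hindep hmean h31 h31 h34
  · rw [e2_zero hmeas hindep hmean h12, zero_mul]
    by_cases h1 : t1 = t3
    · -- singleton is t2
      have k1 : t2 ≠ t1 := Ne.symm h12
      have k3 : t2 ≠ t3 := fun h => h12 (h1.trans h.symm)
      have k4 : t2 ≠ t4 := fun h => hm1 ⟨h1, h⟩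
      calc ∫ ω, ε t1 ω * ε t2 ω * (ε t3 ω * ε t4 ω) ∂μ
          = ∫ ω, ε t2 ω * (ε t1 ω * (ε t3 ω * ε t4 ω)) ∂μ :=
            integral_congr_ae (Eventually.of_forall fun ω => by ring)
        _ = 0 := zero4 hmeas hindep hmean k1 k3 k4
    · by_cases h2 : t1 = t4
      · -- singleton is t2
        have k1 : t2 ≠ t1 := Ne.symm h12
        have k4 : t2 ≠ t4 := fun h => h12 (h2.trans h.symm)
        have k3 : t2 ≠ t3 := fun h => hm2 ⟨h2, h⟩
        calc ∫ ω, ε t1 ω * ε t2 ω * (ε t3 ω * ε t4 ω) ∂μ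
            = ∫ ω, ε t2 ω * (ε t1 ω * (ε t3 ω * ε t4 ω)) ∂μ :=
              integral_congr_ae (Eventually.of_forall fun ω => by ring)
          _ = 0 := zero4 hmeas hindep hmean k1 k3 k4
      · -- singleton is t1
        calc ∫ ω, ε t1 ω * ε t2 ω * (ε t3 ω * ε t4 ω) ∂μ
            = ∫ ω, ε t1 ω * (ε t2 ω * (ε t3 ω * ε t4 ω)) ∂μ :=
              integral_congr_ae (Eventually.of_forall fun ω => by ring)
          _ = 0 := zero4 hmeas hindep hmean h12 h1 h2

end Aux3

set_option linter.unusedSectionVars false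
set_option linter.unusedVariables false

section Aux4
variable {μ : Measure Ω} [IsProbabilityMeasure μ] {ε : ℤ → Ω → ℝ}

private lemma D_est (hmeas : ∀ t, Measurable (ε t))
    (hindep : iIndepFun ε μ)
    (hident : ∀ s t : ℤ, IdentDistrib (ε s) (ε t) μ μ)
    (hmean : ∀ t, ∫ ω, ε t ω ∂μ = 0)
    (h4 : ∀ t, Integrable (fun ω => (ε t ω)^4) μ)
    (t1 t2 t3 t4 : ℤ) :
    |(∫ ω, ε t1 ω * ε t2 ω * (ε t3 ω * ε t4 ω) ∂μ) -
       (∫ ω, ε t1 ω * ε t2 ω ∂μ) * ∫ ω, ε t3 ω * ε t4 ω ∂μ|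
      ≤ ((∫ ω, (ε 0 ω)^4 ∂μ) + (∫ ω, (ε 0 ω)^2 ∂μ)^2) *
        ((if t1 = t3 ∧ t2 = t4 then (1:ℝ) else 0) + (if t1 = t4 ∧ t2 = t3 then (1:ℝ) else 0)) := by
  classical
  by_cases hc : (t1 = t3 ∧ t2 = t4) ∨ (t1 = t4 ∧ t2 = t3)
  · have hχ : (1:ℝ) ≤ (if t1 = t3 ∧ t2 = t4 then (1:ℝ) else 0) +
        (if t1 = t4 ∧ t2 = t3 then (1:ℝ) else 0) := by
      rcases hc with h | h
      · rw [if_pos h]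
        have : (0:ℝ) ≤ (if t1 = t4 ∧ t2 = t3 then (1:ℝ) else 0) := by positivity
        linarith
      · rw [if_pos h]
        have : (0:ℝ) ≤ (if t1 = t3 ∧ t2 = t4 then (1:ℝ) else 0) := by positivity
        linarith
    have hb : |(∫ ω, ε t1 ω * ε t2 ω * (ε t3 ω * ε t4 ω) ∂μ) -
        (∫ ω, ε t1 ω * ε t2 ω ∂μ) * ∫ ω, ε t3 ω * ε t4 ω ∂μ|
        ≤ (∫ ω, (ε 0 ω)^4 ∂μ) + (∫ ω, (ε 0 ω)^2 ∂μ)^2 := by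
      have h1 := E4abs hmeas hident h4 t1 t2 t3 t4
      have h2 := E2abs hmeas hident h4 t1 t2
      have h3 := E2abs hmeas hident h4 t3 t4
      have habs : |(∫ ω, ε t1 ω * ε t2 ω ∂μ) * ∫ ω, ε t3 ω * ε t4 ω ∂μ|
          ≤ (∫ ω, (ε 0 ω)^2 ∂μ)^2 := by
        rw [abs_mul, sq]
        exact mul_le_mul h2 h3 (abs_nonneg _) ((abs_nonneg _).trans h2)
      calc |(∫ ω, ε t1 ω * ε t2 ω * (ε t3 ω * ε t4 ω) ∂μ) -
          (∫ ω, ε t1 ω * ε t2 ω ∂μ) * ∫ ω, ε t3 ω * ε t4 ω ∂μ|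
          ≤ |∫ ω, ε t1 ω * ε t2 ω * (ε t3 ω * ε t4 ω) ∂μ| +
            |(∫ ω, ε t1 ω * ε t2 ω ∂μ) * ∫ ω, ε t3 ω * ε t4 ω ∂μ| := abs_sub _ _
        _ ≤ _ := add_le_add h1 habs
    have hM : (0:ℝ) ≤ (∫ ω, (ε 0 ω)^4 ∂μ) + (∫ ω, (ε 0 ω)^2 ∂μ)^2 :=
      (abs_nonneg _).trans hb
    calc |(∫ ω, ε t1 ω * ε t2 ω * (ε t3 ω * ε t4 ω) ∂μ) -
        (∫ ω, ε t1 ω * ε t2 ω ∂μ) * ∫ ω, ε t3 ω * ε t4 ω ∂μ|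
        ≤ ((∫ ω, (ε 0 ω)^4 ∂μ) + (∫ ω, (ε 0 ω)^2 ∂μ)^2) * 1 := by rw [mul_one]; exact hb
      _ ≤ _ := by
          exact mul_le_mul_of_nonneg_left hχ hM
  · have hc1 : ¬(t1 = t3 ∧ t2 = t4) := fun h => hc (Or.inl h)
    have hc2 : ¬(t1 = t4 ∧ t2 = t3) := fun h => hc (Or.inr h)
    rw [D_zero hmeas hindep hident hmean h4 hc1 hc2, sub_self, abs_zero]
    have h1 : (0:ℝ) ≤ (if t1 = t3 ∧ t2 = t4 then (1:ℝ) else 0) := by positivity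
    have h2 : (0:ℝ) ≤ (if t1 = t4 ∧ t2 = t3 then (1:ℝ) else 0) := by positivity
    have hM : (0:ℝ) ≤ (∫ ω, (ε 0 ω)^4 ∂μ) + (∫ ω, (ε 0 ω)^2 ∂μ)^2 := by
      have : (0:ℝ) ≤ ∫ ω, (ε 0 ω)^4 ∂μ :=
        integral_nonneg fun ω => by positivity
      positivity
    positivity
end Aux4

set_option linter.unusedSectionVars false
set_option linter.unusedVariables false

section Aux5
variable {μ : Measure Ω} [IsProbabilityMeasure μ] {ε : ℤ → Ω → ℝ}

private lemma int_eps (hmeas : ∀ t, Measurable (ε t))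
    (h4 : ∀ t, Integrable (fun ω => (ε t ω)^4) μ) (t : ℤ) :
    Integrable (ε t) μ := by
  refine ((integrable_const (1:ℝ)).add (int_sq hmeas h4 t)).mono'
    (hmeas t).aestronglyMeasurable (Eventually.of_forall fun ω => ?_)
  simp only [Pi.add_apply, Pi.one_apply]
  rw [Real.norm_eq_abs]
  nlinarith [sq_nonneg (|ε t ω| - 1), sq_abs (ε t ω), abs_nonneg (ε t ω)]

private lemma lint_eps (hmeas : ∀ t, Measurable (ε t))
    (hident : ∀ s t : ℤ, IdentDistrib (ε s) (ε t) μ μ)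
    (h4 : ∀ t, Integrable (fun ω => (ε t ω)^4) μ) (t : ℤ) :
    ∫⁻ ω, ‖ε t ω‖₊ ∂μ = ENNReal.ofReal (∫ ω, |ε 0 ω| ∂μ) := by
  erw [← ofReal_integral_norm_eq_lintegral_enorm (int_eps hmeas h4 t)]
  congr 1
  have := ((hident t 0).comp (measurable_abs (α := ℝ))).integral_eq
  simpa [Real.norm_eq_abs, Function.comp] using this

private lemma good_ae {ψ : ℕ → ℝ} (hmeas : ∀ t, Measurable (ε t))
    (hident : ∀ s t : ℤ, IdentDistrib (ε s) (ε t) μ μ)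
    (h4 : ∀ t, Integrable (fun ω => (ε t ω)^4) μ)
    (hψpos : ∀ s, 0 ≤ ψ s) (hψ : Summable ψ) :
    ∀ᵐ ω ∂μ, ∀ t : ℤ, Summable (fun s : ℕ => ‖ψ s * ε (t - (s:ℤ)) ω‖) := by
  rw [ae_all_iff]
  intro t
  set c1 : ℝ := ∫ ω, |ε 0 ω| ∂μ with hc1
  have hc1nn : 0 ≤ c1 := integral_nonneg fun ω => abs_nonneg _
  have key : ∫⁻ ω, ∑' s : ℕ, (‖ψ s * ε (t - (s:ℤ)) ω‖₊ : ℝ≥0∞) ∂μ ≠ ⊤ := by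
    rw [lintegral_tsum (fun s =>
      ((measurable_const.fun_mul (hmeas _)).nnnorm.coe_nnreal_ennreal).aemeasurable)]
    have hle : ∀ s : ℕ, ∫⁻ ω, (‖ψ s * ε (t - (s:ℤ)) ω‖₊ : ℝ≥0∞) ∂μ
        ≤ ENNReal.ofReal (ψ s * c1) := by
      intro s
      have hrw : ∀ ω, (‖ψ s * ε (t - (s:ℤ)) ω‖₊ : ℝ≥0∞)
          = (‖ψ s‖₊ : ℝ≥0∞) * ‖ε (t - (s:ℤ)) ω‖₊ := fun ω => by
        rw [nnnorm_mul, ENNReal.coe_mul]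
      simp_rw [hrw]
      rw [lintegral_const_mul _ (hmeas _).nnnorm.coe_nnreal_ennreal,
        lint_eps hmeas hident h4, ← enorm_eq_nnnorm, Real.enorm_eq_ofReal (hψpos s),
        ← ENNReal.ofReal_mul (hψpos s)]
    refine ne_top_of_le_ne_top ?_ (ENNReal.tsum_le_tsum hle)
    rw [← ENNReal.ofReal_tsum_of_nonneg (fun s => mul_nonneg (hψpos s) hc1nn)
      (hψ.mul_right c1)]
    exact ENNReal.ofReal_lt_top.ne
  have hmeas' : Measurable (fun ω => ∑' s : ℕ, (‖ψ s * ε (t - (s:ℤ)) ω‖₊ : ℝ≥0∞)) :=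
    Measurable.ennreal_tsum fun s => (measurable_const.mul (hmeas _)).nnnorm.coe_nnreal_ennreal
  filter_upwards [ae_lt_top hmeas' key] with ω hω
  have h1 : Summable (fun s : ℕ => ‖ψ s * ε (t - (s:ℤ)) ω‖₊) :=
    ENNReal.tsum_coe_ne_top_iff_summable.1 hω.ne
  have h2 := NNReal.summable_coe.2 h1
  simpa [coe_nnnorm] using h2

private lemma lint_const_mul_le {c B : ℝ} (hc : 0 ≤ c) {f : Ω → ℝ} (hf : Measurable f)
    (h : ∫⁻ ω, ‖f ω‖₊ ∂μ ≤ ENNReal.ofReal B) :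
    ∫⁻ ω, ‖c * f ω‖₊ ∂μ ≤ ENNReal.ofReal (c * B) := by
  have hrw : ∀ ω, (‖c * f ω‖₊ : ℝ≥0∞) = (‖c‖₊ : ℝ≥0∞) * ‖f ω‖₊ := fun ω => by
    rw [nnnorm_mul, ENNReal.coe_mul]
  simp_rw [hrw]
  rw [lintegral_const_mul _ hf.nnnorm.coe_nnreal_ennreal, ← enorm_eq_nnnorm, Real.enorm_eq_ofReal hc,
    ENNReal.ofReal_mul hc]
  exact mul_le_mul_right h _

private lemma lint_pair (hmeas : ∀ t, Measurable (ε t))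
    (hident : ∀ s t : ℤ, IdentDistrib (ε s) (ε t) μ μ)
    (h4 : ∀ t, Integrable (fun ω => (ε t ω)^4) μ) (t1 t2 : ℤ) :
    ∫⁻ ω, ‖ε t1 ω * ε t2 ω‖₊ ∂μ ≤ ENNReal.ofReal (∫ ω, (ε 0 ω)^2 ∂μ) := by
  erw [← ofReal_integral_norm_eq_lintegral_enorm (int_mul2 hmeas h4 t1 t2)]
  apply ENNReal.ofReal_le_ofReal
  have := abs_int_pair hmeas hident h4 t1 t2
  simp only [Real.norm_eq_abs]
  exact this

private lemma lint_quad (hmeas : ∀ t, Measurable (ε t))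
    (hident : ∀ s t : ℤ, IdentDistrib (ε s) (ε t) μ μ)
    (h4 : ∀ t, Integrable (fun ω => (ε t ω)^4) μ) (t1 t2 t3 t4 : ℤ) :
    ∫⁻ ω, ‖ε t1 ω * ε t2 ω * (ε t3 ω * ε t4 ω)‖₊ ∂μ ≤ ENNReal.ofReal (∫ ω, (ε 0 ω)^4 ∂μ) := by
  erw [← ofReal_integral_norm_eq_lintegral_enorm (int_mul4 hmeas h4 t1 t2 t3 t4)]
  apply ENNReal.ofReal_le_ofReal
  have := abs_int_quad hmeas hident h4 t1 t2 t3 t4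
  simp only [Real.norm_eq_abs]
  exact this

end Aux5

set_option linter.unusedSectionVars false
set_option linter.unusedVariables false

section Aux6
variable {μ : Measure Ω} [IsProbabilityMeasure μ] {ε : ℤ → Ω → ℝ}

private lemma expand2 (hmeas : ∀ t, Measurable (ε t))
    (hident : ∀ s t : ℤ, IdentDistrib (ε s) (ε t) μ μ)
    (h4 : ∀ t, Integrable (fun ω => (ε t ω)^4) μ)
    {ψ : ℕ → ℝ} (hψpos : ∀ s, 0 ≤ ψ s) (hψ : Summable ψ)
    {Y : ℤ → Ω → ℝ} (hY : ∀ t ω, Y t ω = ∑' s : ℕ, ψ s * ε (t - (s:ℤ)) ω)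
    (hgood : ∀ᵐ ω ∂μ, ∀ t : ℤ, Summable (fun s : ℕ => ‖ψ s * ε (t - (s:ℤ)) ω‖))
    (a b : ℤ) :
    ∫ ω, Y a ω * Y b ω ∂μ = ∑' p : ℕ × ℕ,
      (ψ p.1 * ψ p.2) * ∫ ω, ε (a - (p.1:ℤ)) ω * ε (b - (p.2:ℤ)) ω ∂μ := by
  have hσnn : 0 ≤ ∫ ω, (ε 0 ω)^2 ∂μ := integral_nonneg fun ω => sq_nonneg _
  have hae : (fun ω => Y a ω * Y b ω) =ᵐ[μ]
      (fun ω => ∑' p : ℕ × ℕ, (ψ p.1 * ε (a - (p.1:ℤ)) ω) * (ψ p.2 * ε (b - (p.2:ℤ)) ω)) := by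
    filter_upwards [hgood] with ω hω
    rw [hY a ω, hY b ω]
    exact tsum_mul_tsum_of_summable_norm (hω a) (hω b)
  have hfin : ∑' p : ℕ × ℕ,
      ∫⁻ ω, ‖(ψ p.1 * ε (a - (p.1:ℤ)) ω) * (ψ p.2 * ε (b - (p.2:ℤ)) ω)‖₊ ∂μ ≠ ⊤ := by
    have hle : ∀ p : ℕ × ℕ,
        ∫⁻ ω, ‖(ψ p.1 * ε (a - (p.1:ℤ)) ω) * (ψ p.2 * ε (b - (p.2:ℤ)) ω)‖₊ ∂μ
          ≤ ENNReal.ofReal ((ψ p.1 * ψ p.2) * ∫ ω, (ε 0 ω)^2 ∂μ) := by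
      intro p
      have hrw : ∀ ω, (ψ p.1 * ε (a - (p.1:ℤ)) ω) * (ψ p.2 * ε (b - (p.2:ℤ)) ω)
          = (ψ p.1 * ψ p.2) * (ε (a - (p.1:ℤ)) ω * ε (b - (p.2:ℤ)) ω) := fun ω => by ring
      simp_rw [hrw]
      exact lint_const_mul_le (mul_nonneg (hψpos _) (hψpos _))
        ((hmeas _).mul (hmeas _)) (lint_pair hmeas hident h4 _ _)
    refine ne_top_of_le_ne_top ?_ (ENNReal.tsum_le_tsum hle)
    rw [← ENNReal.ofReal_tsum_of_nonneg
      (fun p => mul_nonneg (mul_nonneg (hψpos _) (hψpos _)) hσnn)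
      (((hψ.mul_of_nonneg hψ (fun s => hψpos s) (fun s => hψpos s))).mul_right _)]
    exact ENNReal.ofReal_lt_top.ne
  rw [integral_congr_ae hae, integral_tsum (fun p =>
    ((measurable_const.fun_mul (hmeas _)).fun_mul (measurable_const.fun_mul (hmeas _))).aestronglyMeasurable)
    hfin]
  refine tsum_congr fun p => ?_
  have hrw : ∀ ω, (ψ p.1 * ε (a - (p.1:ℤ)) ω) * (ψ p.2 * ε (b - (p.2:ℤ)) ω)
      = (ψ p.1 * ψ p.2) * (ε (a - (p.1:ℤ)) ω * ε (b - (p.2:ℤ)) ω) := fun ω => by ring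
  simp_rw [hrw]
  exact integral_const_mul _ _

private lemma expand4 (hmeas : ∀ t, Measurable (ε t))
    (hident : ∀ s t : ℤ, IdentDistrib (ε s) (ε t) μ μ)
    (h4 : ∀ t, Integrable (fun ω => (ε t ω)^4) μ)
    {ψ : ℕ → ℝ} (hψpos : ∀ s, 0 ≤ ψ s) (hψ : Summable ψ)
    {Y : ℤ → Ω → ℝ} (hY : ∀ t ω, Y t ω = ∑' s : ℕ, ψ s * ε (t - (s:ℤ)) ω)
    (hgood : ∀ᵐ ω ∂μ, ∀ t : ℤ, Summable (fun s : ℕ => ‖ψ s * ε (t - (s:ℤ)) ω‖))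
    (a b c d : ℤ) :
    ∫ ω, Y a ω * Y b ω * (Y c ω * Y d ω) ∂μ = ∑' q : (ℕ × ℕ) × (ℕ × ℕ),
      (ψ q.1.1 * ψ q.1.2 * (ψ q.2.1 * ψ q.2.2)) *
        ∫ ω, ε (a - (q.1.1:ℤ)) ω * ε (b - (q.1.2:ℤ)) ω *
          (ε (c - (q.2.1:ℤ)) ω * ε (d - (q.2.2:ℤ)) ω) ∂μ := by
  have hm4nn : 0 ≤ ∫ ω, (ε 0 ω)^4 ∂μ := integral_nonneg fun ω => by positivity
  have hΨsum : Summable (fun q : (ℕ × ℕ) × (ℕ × ℕ) =>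
      ψ q.1.1 * ψ q.1.2 * (ψ q.2.1 * ψ q.2.2)) := by
    have h2 : Summable (fun p : ℕ × ℕ => ψ p.1 * ψ p.2) :=
      hψ.mul_of_nonneg hψ (fun s => hψpos s) (fun s => hψpos s)
    exact h2.mul_of_nonneg h2 (fun p => mul_nonneg (hψpos _) (hψpos _))
      (fun p => mul_nonneg (hψpos _) (hψpos _))
  have hae : (fun ω => Y a ω * Y b ω * (Y c ω * Y d ω)) =ᵐ[μ]
      (fun ω => ∑' q : (ℕ × ℕ) × (ℕ × ℕ),
        ((ψ q.1.1 * ε (a - (q.1.1:ℤ)) ω) * (ψ q.1.2 * ε (b - (q.1.2:ℤ)) ω)) *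
          ((ψ q.2.1 * ε (c - (q.2.1:ℤ)) ω) * (ψ q.2.2 * ε (d - (q.2.2:ℤ)) ω))) := by
    filter_upwards [hgood] with ω hω
    rw [hY a ω, hY b ω, hY c ω, hY d ω,
      tsum_mul_tsum_of_summable_norm (hω a) (hω b),
      tsum_mul_tsum_of_summable_norm (hω c) (hω d)]
    exact tsum_mul_tsum_of_summable_norm ((hω a).mul_norm (hω b)) ((hω c).mul_norm (hω d))
  have hfin : ∑' q : (ℕ × ℕ) × (ℕ × ℕ),
      ∫⁻ ω, ‖((ψ q.1.1 * ε (a - (q.1.1:ℤ)) ω) * (ψ q.1.2 * ε (b - (q.1.2:ℤ)) ω)) *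
        ((ψ q.2.1 * ε (c - (q.2.1:ℤ)) ω) * (ψ q.2.2 * ε (d - (q.2.2:ℤ)) ω))‖₊ ∂μ ≠ ⊤ := by
    have hle : ∀ q : (ℕ × ℕ) × (ℕ × ℕ),
        ∫⁻ ω, ‖((ψ q.1.1 * ε (a - (q.1.1:ℤ)) ω) * (ψ q.1.2 * ε (b - (q.1.2:ℤ)) ω)) *
          ((ψ q.2.1 * ε (c - (q.2.1:ℤ)) ω) * (ψ q.2.2 * ε (d - (q.2.2:ℤ)) ω))‖₊ ∂μ
          ≤ ENNReal.ofReal ((ψ q.1.1 * ψ q.1.2 * (ψ q.2.1 * ψ q.2.2)) *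
              ∫ ω, (ε 0 ω)^4 ∂μ) := by
      intro q
      have hrw : ∀ ω, ((ψ q.1.1 * ε (a - (q.1.1:ℤ)) ω) * (ψ q.1.2 * ε (b - (q.1.2:ℤ)) ω)) *
          ((ψ q.2.1 * ε (c - (q.2.1:ℤ)) ω) * (ψ q.2.2 * ε (d - (q.2.2:ℤ)) ω))
          = (ψ q.1.1 * ψ q.1.2 * (ψ q.2.1 * ψ q.2.2)) *
            (ε (a - (q.1.1:ℤ)) ω * ε (b - (q.1.2:ℤ)) ω *
              (ε (c - (q.2.1:ℤ)) ω * ε (d - (q.2.2:ℤ)) ω)) := fun ω => by ring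
      simp_rw [hrw]
      exact lint_const_mul_le
        (mul_nonneg (mul_nonneg (hψpos _) (hψpos _)) (mul_nonneg (hψpos _) (hψpos _)))
        (((hmeas _).mul (hmeas _)).mul ((hmeas _).mul (hmeas _)))
        (lint_quad hmeas hident h4 _ _ _ _)
    refine ne_top_of_le_ne_top ?_ (ENNReal.tsum_le_tsum hle)
    rw [← ENNReal.ofReal_tsum_of_nonneg
      (fun q => mul_nonneg
        (mul_nonneg (mul_nonneg (hψpos _) (hψpos _)) (mul_nonneg (hψpos _) (hψpos _))) hm4nn)
      (hΨsum.mul_right _)]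
    exact ENNReal.ofReal_lt_top.ne
  rw [integral_congr_ae hae, integral_tsum (fun q =>
    (((measurable_const.fun_mul (hmeas _)).fun_mul (measurable_const.fun_mul (hmeas _))).fun_mul
      ((measurable_const.fun_mul (hmeas _)).fun_mul (measurable_const.fun_mul (hmeas _)))).aestronglyMeasurable)
    hfin]
  refine tsum_congr fun q => ?_
  have hrw : ∀ ω, ((ψ q.1.1 * ε (a - (q.1.1:ℤ)) ω) * (ψ q.1.2 * ε (b - (q.1.2:ℤ)) ω)) *
      ((ψ q.2.1 * ε (c - (q.2.1:ℤ)) ω) * (ψ q.2.2 * ε (d - (q.2.2:ℤ)) ω))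
      = (ψ q.1.1 * ψ q.1.2 * (ψ q.2.1 * ψ q.2.2)) *
        (ε (a - (q.1.1:ℤ)) ω * ε (b - (q.1.2:ℤ)) ω *
          (ε (c - (q.2.1:ℤ)) ω * ε (d - (q.2.2:ℤ)) ω)) := fun ω => by ring
  simp_rw [hrw]
  exact integral_const_mul _ _

end Aux6

/-- key estimate in Lemma 4: for a linear process with nonnegative
absolutely summable coefficients and i.i.d. mean-zero innovations with finite fourth
moment, the covariances of lagged products are summable in the time shift, uniformly over
the lag difference `m`. -/
theorem lagged_products_cov_summable
    (μ : Measure Ω) [IsProbabilityMeasure μ]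
    (ε : ℤ → Ω → ℝ) (ψ : ℕ → ℝ)
    (hmeas : ∀ t, Measurable (ε t))
    (hindep : iIndepFun ε μ)
    (hident : ∀ s t : ℤ, IdentDistrib (ε s) (ε t) μ μ)
    (hmean : ∀ t, ∫ ω, ε t ω ∂μ = 0)
    (hfourth : ∀ t, Integrable (fun ω => (ε t ω) ^ 4) μ)
    (hψpos : ∀ s, 0 ≤ ψ s) (hψ : Summable ψ)
    (Y : ℤ → Ω → ℝ) (hY : ∀ t ω, Y t ω = ∑' s : ℕ, ψ s * ε (t - (s : ℤ)) ω) :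
    ∃ C : ℝ, ∀ m : ℤ,
      Summable (fun s : ℕ =>
        |(∫ ω, Y 0 ω * Y m ω * (Y (s : ℤ) ω * Y ((s : ℤ) + m) ω) ∂μ) -
          (∫ ω, Y 0 ω * Y m ω ∂μ) * ∫ ω, Y (s : ℤ) ω * Y ((s : ℤ) + m) ω ∂μ|) ∧
      ∑' s : ℕ,
        |(∫ ω, Y 0 ω * Y m ω * (Y (s : ℤ) ω * Y ((s : ℤ) + m) ω) ∂μ) -
          (∫ ω, Y 0 ω * Y m ω ∂μ) * ∫ ω, Y (s : ℤ) ω * Y ((s : ℤ) + m) ω ∂μ| ≤ C := by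
  classical
  have hσ2nn : 0 ≤ ∫ ω, (ε 0 ω)^2 ∂μ := integral_nonneg fun ω => sq_nonneg _
  have hm4nn : 0 ≤ ∫ ω, (ε 0 ω)^4 ∂μ := integral_nonneg fun ω => by positivity
  have hMnn : 0 ≤ (∫ ω, (ε 0 ω)^4 ∂μ) + (∫ ω, (ε 0 ω)^2 ∂μ)^2 := by positivity
  have hΨ2 : Summable (fun p : ℕ × ℕ => ψ p.1 * ψ p.2) :=
    hψ.mul_of_nonneg hψ (fun s => hψpos s) (fun s => hψpos s)
  have hΨ2nn : ∀ p : ℕ × ℕ, 0 ≤ ψ p.1 * ψ p.2 := fun p => mul_nonneg (hψpos _) (hψpos _)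
  have hΨsum : Summable (fun q : (ℕ × ℕ) × (ℕ × ℕ) => ψ q.1.1 * ψ q.1.2 * (ψ q.2.1 * ψ q.2.2)) :=
    hΨ2.mul_of_nonneg hΨ2 hΨ2nn hΨ2nn
  have hΨnn : ∀ q : (ℕ × ℕ) × (ℕ × ℕ), 0 ≤ ψ q.1.1 * ψ q.1.2 * (ψ q.2.1 * ψ q.2.2) :=
    fun q => mul_nonneg (hΨ2nn _) (hΨ2nn _)
  have hgood : ∀ᵐ ω ∂μ, ∀ t : ℤ, Summable (fun s : ℕ => ‖ψ s * ε (t - (s:ℤ)) ω‖) :=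
    good_ae hmeas hident hfourth hψpos hψ
  refine ⟨2 * ((∫ ω, (ε 0 ω)^4 ∂μ) + (∫ ω, (ε 0 ω)^2 ∂μ)^2) *
    (∑' q : (ℕ × ℕ) × (ℕ × ℕ), ψ q.1.1 * ψ q.1.2 * (ψ q.2.1 * ψ q.2.2)), fun m => ?_⟩
  -- the indicator function
  set χ : (ℕ × ℕ) × (ℕ × ℕ) → ℕ → ℝ := fun q s =>
    (if (0 - (q.1.1:ℤ) = (s:ℤ) - (q.2.1:ℤ) ∧ m - (q.1.2:ℤ) = (s:ℤ) + m - (q.2.2:ℤ))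
      then (1:ℝ) else 0) +
    (if (0 - (q.1.1:ℤ) = (s:ℤ) + m - (q.2.2:ℤ) ∧ m - (q.1.2:ℤ) = (s:ℤ) - (q.2.1:ℤ))
      then (1:ℝ) else 0) with hχdef
  have hχnn : ∀ q s, 0 ≤ χ q s := by
    intro q s
    simp only [hχdef]
    have h1 : (0:ℝ) ≤ (if (0 - (q.1.1:ℤ) = (s:ℤ) - (q.2.1:ℤ) ∧
        m - (q.1.2:ℤ) = (s:ℤ) + m - (q.2.2:ℤ)) then (1:ℝ) else 0) := by positivity
    have h2 : (0:ℝ) ≤ (if (0 - (q.1.1:ℤ) = (s:ℤ) + m - (q.2.2:ℤ) ∧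
        m - (q.1.2:ℤ) = (s:ℤ) - (q.2.1:ℤ)) then (1:ℝ) else 0) := by positivity
    exact add_nonneg h1 h2
  have hχle2 : ∀ q s, χ q s ≤ 2 := by
    intro q s
    simp only [hχdef]
    split_ifs <;> norm_num
  have hχsum : ∀ (q : (ℕ × ℕ) × (ℕ × ℕ)) (N : ℕ), ∑ s ∈ Finset.range N, χ q s ≤ 2 := by
    intro q N
    simp only [hχdef]
    rw [Finset.sum_add_distrib]
    have hb1 : ∑ s ∈ Finset.range N, (if (0 - (q.1.1:ℤ) = (s:ℤ) - (q.2.1:ℤ) ∧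
        m - (q.1.2:ℤ) = (s:ℤ) + m - (q.2.2:ℤ)) then (1:ℝ) else 0) ≤ 1 := by
      refine le_trans (Finset.sum_le_sum fun s _ => ind_le_ind (Q := (s:ℤ) = (q.2.1:ℤ) - q.1.1)
        (fun h => by omega)) (sum_ind_le_one _ _)
    have hb2 : ∑ s ∈ Finset.range N, (if (0 - (q.1.1:ℤ) = (s:ℤ) + m - (q.2.2:ℤ) ∧
        m - (q.1.2:ℤ) = (s:ℤ) - (q.2.1:ℤ)) then (1:ℝ) else 0) ≤ 1 := by
      refine le_trans (Finset.sum_le_sum fun s _ => ind_le_ind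
        (Q := (s:ℤ) = (q.2.2:ℤ) - q.1.1 - m) (fun h => by omega)) (sum_ind_le_one _ _)
    linarith
  have hsummχ : ∀ s : ℕ, Summable (fun q : (ℕ × ℕ) × (ℕ × ℕ) =>
      ψ q.1.1 * ψ q.1.2 * (ψ q.2.1 * ψ q.2.2) * χ q s) := by
    intro s
    refine Summable.of_nonneg_of_le (fun q => mul_nonneg (hΨnn q) (hχnn q s))
      (fun q => ?_) (hΨsum.mul_right 2)
    exact mul_le_mul_of_nonneg_left (hχle2 q s) (hΨnn q)
  -- the key per-s estimate
  have hkey : ∀ s : ℕ,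
      |(∫ ω, Y 0 ω * Y m ω * (Y (s : ℤ) ω * Y ((s : ℤ) + m) ω) ∂μ) -
        (∫ ω, Y 0 ω * Y m ω ∂μ) * ∫ ω, Y (s : ℤ) ω * Y ((s : ℤ) + m) ω ∂μ|
      ≤ ((∫ ω, (ε 0 ω)^4 ∂μ) + (∫ ω, (ε 0 ω)^2 ∂μ)^2) *
        ∑' q : (ℕ × ℕ) × (ℕ × ℕ), ψ q.1.1 * ψ q.1.2 * (ψ q.2.1 * ψ q.2.2) * χ q s := by
    intro s
    have e4 := expand4 hmeas hident hfourth hψpos hψ hY hgood 0 m (s:ℤ) ((s:ℤ) + m)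
    have e2a := expand2 hmeas hident hfourth hψpos hψ hY hgood 0 m
    have e2b := expand2 hmeas hident hfourth hψpos hψ hY hgood (s:ℤ) ((s:ℤ) + m)
    rw [e4, e2a, e2b]
    -- summability of the norm-bounded families
    have hsnorm_a : Summable (fun p : ℕ × ℕ =>
        ‖(ψ p.1 * ψ p.2) * ∫ ω, ε (0 - (p.1:ℤ)) ω * ε (m - (p.2:ℤ)) ω ∂μ‖) := by
      refine Summable.of_nonneg_of_le (fun p => norm_nonneg _) (fun p => ?_)
        (hΨ2.mul_right (∫ ω, (ε 0 ω)^2 ∂μ))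
      rw [Real.norm_eq_abs, abs_mul, abs_of_nonneg (hΨ2nn p)]
      exact mul_le_mul_of_nonneg_left (E2abs hmeas hident hfourth _ _) (hΨ2nn p)
    have hsnorm_b : Summable (fun p : ℕ × ℕ =>
        ‖(ψ p.1 * ψ p.2) * ∫ ω, ε ((s:ℤ) - (p.1:ℤ)) ω * ε ((s:ℤ) + m - (p.2:ℤ)) ω ∂μ‖) := by
      refine Summable.of_nonneg_of_le (fun p => norm_nonneg _) (fun p => ?_)
        (hΨ2.mul_right (∫ ω, (ε 0 ω)^2 ∂μ))
      rw [Real.norm_eq_abs, abs_mul, abs_of_nonneg (hΨ2nn p)]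
      exact mul_le_mul_of_nonneg_left (E2abs hmeas hident hfourth _ _) (hΨ2nn p)
    rw [tsum_mul_tsum_of_summable_norm hsnorm_a hsnorm_b]
    have hs4 : Summable (fun q : (ℕ × ℕ) × (ℕ × ℕ) =>
        (ψ q.1.1 * ψ q.1.2 * (ψ q.2.1 * ψ q.2.2)) *
          ∫ ω, ε (0 - (q.1.1:ℤ)) ω * ε (m - (q.1.2:ℤ)) ω *
            (ε ((s:ℤ) - (q.2.1:ℤ)) ω * ε ((s:ℤ) + m - (q.2.2:ℤ)) ω) ∂μ) := by
      refine Summable.of_norm_bounded (hΨsum.mul_right (∫ ω, (ε 0 ω)^4 ∂μ)) (fun q => ?_)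
      rw [Real.norm_eq_abs, abs_mul, abs_of_nonneg (hΨnn q)]
      exact mul_le_mul_of_nonneg_left (E4abs hmeas hident hfourth _ _ _ _) (hΨnn q)
    have hsab : Summable (fun q : (ℕ × ℕ) × (ℕ × ℕ) =>
        ((ψ q.1.1 * ψ q.1.2) * ∫ ω, ε (0 - (q.1.1:ℤ)) ω * ε (m - (q.1.2:ℤ)) ω ∂μ) *
        ((ψ q.2.1 * ψ q.2.2) *
          ∫ ω, ε ((s:ℤ) - (q.2.1:ℤ)) ω * ε ((s:ℤ) + m - (q.2.2:ℤ)) ω ∂μ)) :=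
      summable_mul_of_summable_norm hsnorm_a hsnorm_b
    rw [← Summable.tsum_sub hs4 hsab]
    have hterm : ∀ q : (ℕ × ℕ) × (ℕ × ℕ),
        ‖(ψ q.1.1 * ψ q.1.2 * (ψ q.2.1 * ψ q.2.2)) *
            (∫ ω, ε (0 - (q.1.1:ℤ)) ω * ε (m - (q.1.2:ℤ)) ω *
              (ε ((s:ℤ) - (q.2.1:ℤ)) ω * ε ((s:ℤ) + m - (q.2.2:ℤ)) ω) ∂μ) -
          ((ψ q.1.1 * ψ q.1.2) * ∫ ω, ε (0 - (q.1.1:ℤ)) ω * ε (m - (q.1.2:ℤ)) ω ∂μ) *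
          ((ψ q.2.1 * ψ q.2.2) *
            ∫ ω, ε ((s:ℤ) - (q.2.1:ℤ)) ω * ε ((s:ℤ) + m - (q.2.2:ℤ)) ω ∂μ)‖
        ≤ ((∫ ω, (ε 0 ω)^4 ∂μ) + (∫ ω, (ε 0 ω)^2 ∂μ)^2) *
            (ψ q.1.1 * ψ q.1.2 * (ψ q.2.1 * ψ q.2.2) * χ q s) := by
      intro q
      have hre : (ψ q.1.1 * ψ q.1.2 * (ψ q.2.1 * ψ q.2.2)) *
            (∫ ω, ε (0 - (q.1.1:ℤ)) ω * ε (m - (q.1.2:ℤ)) ω *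
              (ε ((s:ℤ) - (q.2.1:ℤ)) ω * ε ((s:ℤ) + m - (q.2.2:ℤ)) ω) ∂μ) -
          ((ψ q.1.1 * ψ q.1.2) * ∫ ω, ε (0 - (q.1.1:ℤ)) ω * ε (m - (q.1.2:ℤ)) ω ∂μ) *
          ((ψ q.2.1 * ψ q.2.2) *
            ∫ ω, ε ((s:ℤ) - (q.2.1:ℤ)) ω * ε ((s:ℤ) + m - (q.2.2:ℤ)) ω ∂μ)
          = (ψ q.1.1 * ψ q.1.2 * (ψ q.2.1 * ψ q.2.2)) *
            ((∫ ω, ε (0 - (q.1.1:ℤ)) ω * ε (m - (q.1.2:ℤ)) ω *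
              (ε ((s:ℤ) - (q.2.1:ℤ)) ω * ε ((s:ℤ) + m - (q.2.2:ℤ)) ω) ∂μ) -
             (∫ ω, ε (0 - (q.1.1:ℤ)) ω * ε (m - (q.1.2:ℤ)) ω ∂μ) *
             (∫ ω, ε ((s:ℤ) - (q.2.1:ℤ)) ω * ε ((s:ℤ) + m - (q.2.2:ℤ)) ω ∂μ)) := by ring
      rw [hre, Real.norm_eq_abs, abs_mul, abs_of_nonneg (hΨnn q)]
      have hD := D_est hmeas hindep hident hmean hfourth
        (0 - (q.1.1:ℤ)) (m - (q.1.2:ℤ)) ((s:ℤ) - (q.2.1:ℤ)) ((s:ℤ) + m - (q.2.2:ℤ))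
      calc (ψ q.1.1 * ψ q.1.2 * (ψ q.2.1 * ψ q.2.2)) *
            |(∫ ω, ε (0 - (q.1.1:ℤ)) ω * ε (m - (q.1.2:ℤ)) ω *
              (ε ((s:ℤ) - (q.2.1:ℤ)) ω * ε ((s:ℤ) + m - (q.2.2:ℤ)) ω) ∂μ) -
             (∫ ω, ε (0 - (q.1.1:ℤ)) ω * ε (m - (q.1.2:ℤ)) ω ∂μ) *
             (∫ ω, ε ((s:ℤ) - (q.2.1:ℤ)) ω * ε ((s:ℤ) + m - (q.2.2:ℤ)) ω ∂μ)|
          ≤ (ψ q.1.1 * ψ q.1.2 * (ψ q.2.1 * ψ q.2.2)) *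
            (((∫ ω, (ε 0 ω)^4 ∂μ) + (∫ ω, (ε 0 ω)^2 ∂μ)^2) * χ q s) := by
            refine mul_le_mul_of_nonneg_left ?_ (hΨnn q)
            simp only [hχdef]
            exact hD
        _ = ((∫ ω, (ε 0 ω)^4 ∂μ) + (∫ ω, (ε 0 ω)^2 ∂μ)^2) *
            (ψ q.1.1 * ψ q.1.2 * (ψ q.2.1 * ψ q.2.2) * χ q s) := by ring
    have hsMχ : Summable (fun q : (ℕ × ℕ) × (ℕ × ℕ) =>
        ((∫ ω, (ε 0 ω)^4 ∂μ) + (∫ ω, (ε 0 ω)^2 ∂μ)^2) *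
          (ψ q.1.1 * ψ q.1.2 * (ψ q.2.1 * ψ q.2.2) * χ q s)) := (hsummχ s).mul_left _
    have hnormdiff : Summable (fun q : (ℕ × ℕ) × (ℕ × ℕ) =>
        ‖(ψ q.1.1 * ψ q.1.2 * (ψ q.2.1 * ψ q.2.2)) *
            (∫ ω, ε (0 - (q.1.1:ℤ)) ω * ε (m - (q.1.2:ℤ)) ω *
              (ε ((s:ℤ) - (q.2.1:ℤ)) ω * ε ((s:ℤ) + m - (q.2.2:ℤ)) ω) ∂μ) -
          ((ψ q.1.1 * ψ q.1.2) * ∫ ω, ε (0 - (q.1.1:ℤ)) ω * ε (m - (q.1.2:ℤ)) ω ∂μ) *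
          ((ψ q.2.1 * ψ q.2.2) *
            ∫ ω, ε ((s:ℤ) - (q.2.1:ℤ)) ω * ε ((s:ℤ) + m - (q.2.2:ℤ)) ω ∂μ)‖) :=
      Summable.of_nonneg_of_le (fun q => norm_nonneg _) hterm hsMχ
    calc |∑' q : (ℕ × ℕ) × (ℕ × ℕ),
          ((ψ q.1.1 * ψ q.1.2 * (ψ q.2.1 * ψ q.2.2)) *
            (∫ ω, ε (0 - (q.1.1:ℤ)) ω * ε (m - (q.1.2:ℤ)) ω *
              (ε ((s:ℤ) - (q.2.1:ℤ)) ω * ε ((s:ℤ) + m - (q.2.2:ℤ)) ω) ∂μ) -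
          ((ψ q.1.1 * ψ q.1.2) * ∫ ω, ε (0 - (q.1.1:ℤ)) ω * ε (m - (q.1.2:ℤ)) ω ∂μ) *
          ((ψ q.2.1 * ψ q.2.2) *
            ∫ ω, ε ((s:ℤ) - (q.2.1:ℤ)) ω * ε ((s:ℤ) + m - (q.2.2:ℤ)) ω ∂μ))|
        ≤ ∑' q : (ℕ × ℕ) × (ℕ × ℕ),
          ‖(ψ q.1.1 * ψ q.1.2 * (ψ q.2.1 * ψ q.2.2)) *
            (∫ ω, ε (0 - (q.1.1:ℤ)) ω * ε (m - (q.1.2:ℤ)) ω *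
              (ε ((s:ℤ) - (q.2.1:ℤ)) ω * ε ((s:ℤ) + m - (q.2.2:ℤ)) ω) ∂μ) -
          ((ψ q.1.1 * ψ q.1.2) * ∫ ω, ε (0 - (q.1.1:ℤ)) ω * ε (m - (q.1.2:ℤ)) ω ∂μ) *
          ((ψ q.2.1 * ψ q.2.2) *
            ∫ ω, ε ((s:ℤ) - (q.2.1:ℤ)) ω * ε ((s:ℤ) + m - (q.2.2:ℤ)) ω ∂μ)‖ := by
          rw [← Real.norm_eq_abs]
          exact norm_tsum_le_tsum_norm hnormdiff
      _ ≤ ∑' q : (ℕ × ℕ) × (ℕ × ℕ),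
          ((∫ ω, (ε 0 ω)^4 ∂μ) + (∫ ω, (ε 0 ω)^2 ∂μ)^2) *
            (ψ q.1.1 * ψ q.1.2 * (ψ q.2.1 * ψ q.2.2) * χ q s) :=
          Summable.tsum_le_tsum hterm hnormdiff hsMχ
      _ = ((∫ ω, (ε 0 ω)^4 ∂μ) + (∫ ω, (ε 0 ω)^2 ∂μ)^2) *
          ∑' q : (ℕ × ℕ) × (ℕ × ℕ), ψ q.1.1 * ψ q.1.2 * (ψ q.2.1 * ψ q.2.2) * χ q s :=
          tsum_mul_left
  -- partial sum bound
  have hSN : ∀ N : ℕ, ∑ s ∈ Finset.range N,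
      |(∫ ω, Y 0 ω * Y m ω * (Y (s : ℤ) ω * Y ((s : ℤ) + m) ω) ∂μ) -
        (∫ ω, Y 0 ω * Y m ω ∂μ) * ∫ ω, Y (s : ℤ) ω * Y ((s : ℤ) + m) ω ∂μ|
      ≤ 2 * ((∫ ω, (ε 0 ω)^4 ∂μ) + (∫ ω, (ε 0 ω)^2 ∂μ)^2) *
        (∑' q : (ℕ × ℕ) × (ℕ × ℕ), ψ q.1.1 * ψ q.1.2 * (ψ q.2.1 * ψ q.2.2)) := by
    intro N
    calc ∑ s ∈ Finset.range N,
        |(∫ ω, Y 0 ω * Y m ω * (Y (s : ℤ) ω * Y ((s : ℤ) + m) ω) ∂μ) -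
          (∫ ω, Y 0 ω * Y m ω ∂μ) * ∫ ω, Y (s : ℤ) ω * Y ((s : ℤ) + m) ω ∂μ|
        ≤ ∑ s ∈ Finset.range N, ((∫ ω, (ε 0 ω)^4 ∂μ) + (∫ ω, (ε 0 ω)^2 ∂μ)^2) *
            ∑' q : (ℕ × ℕ) × (ℕ × ℕ), ψ q.1.1 * ψ q.1.2 * (ψ q.2.1 * ψ q.2.2) * χ q s :=
          Finset.sum_le_sum fun s _ => hkey s
      _ = ((∫ ω, (ε 0 ω)^4 ∂μ) + (∫ ω, (ε 0 ω)^2 ∂μ)^2) *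
          ∑ s ∈ Finset.range N,
            ∑' q : (ℕ × ℕ) × (ℕ × ℕ), ψ q.1.1 * ψ q.1.2 * (ψ q.2.1 * ψ q.2.2) * χ q s := by
          rw [Finset.mul_sum]
      _ = ((∫ ω, (ε 0 ω)^4 ∂μ) + (∫ ω, (ε 0 ω)^2 ∂μ)^2) *
          ∑' q : (ℕ × ℕ) × (ℕ × ℕ), ∑ s ∈ Finset.range N,
            ψ q.1.1 * ψ q.1.2 * (ψ q.2.1 * ψ q.2.2) * χ q s := by
          rw [Summable.tsum_finsetSum (fun s _ => hsummχ s)]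
      _ ≤ ((∫ ω, (ε 0 ω)^4 ∂μ) + (∫ ω, (ε 0 ω)^2 ∂μ)^2) *
          ∑' q : (ℕ × ℕ) × (ℕ × ℕ), ψ q.1.1 * ψ q.1.2 * (ψ q.2.1 * ψ q.2.2) * 2 := by
          refine mul_le_mul_of_nonneg_left (Summable.tsum_le_tsum (fun q => ?_) ?_
            (hΨsum.mul_right 2)) hMnn
          · rw [← Finset.mul_sum]
            exact mul_le_mul_of_nonneg_left (hχsum q N) (hΨnn q)
          · refine Summable.of_nonneg_of_le
              (fun q => Finset.sum_nonneg fun s _ => mul_nonneg (hΨnn q) (hχnn q s))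
              (fun q => ?_) (hΨsum.mul_right 2)
            rw [← Finset.mul_sum]
            exact mul_le_mul_of_nonneg_left (hχsum q N) (hΨnn q)
      _ = 2 * ((∫ ω, (ε 0 ω)^4 ∂μ) + (∫ ω, (ε 0 ω)^2 ∂μ)^2) *
          (∑' q : (ℕ × ℕ) × (ℕ × ℕ), ψ q.1.1 * ψ q.1.2 * (ψ q.2.1 * ψ q.2.2)) := by
          rw [tsum_mul_right]
          ring
  exact ⟨summable_of_sum_range_le (fun s => abs_nonneg _) hSN,
    Real.tsum_le_of_sum_range_le (fun s => abs_nonneg _) hSN⟩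

end
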